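/- Let G : ℕ → ℂ satisfy G(i+2) = G(i+1) + G(i) for all i ≥ 0, and let w ∈ ℂ with w ≠ 0 and 1 − w − w² ≠ 0. If w^k · G(k) → 0 and k · w^k · G(k) → 0 as k → ∞, then the series ∑_{j=0}^{∞} w^j · j · G(j) converges and ∑_{j=0}^{∞} w^j · j · G(j) = ((2 − w)·w²·G(0) + (w² + 1)·w·G(1)) / (w² + w − 1)². -/

import Mathlib

open Filter Finset

private lemma summable_aux_wls (c z : ℂ)
    (h : Filter.Tendsto (fun k : ℕ => (k : ℂ) * c * z ^ k) Filter.atTop (nhds 0)) :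
    Summable (fun k : ℕ => (k : ℂ) * c * z ^ k) := by
  rcases eq_or_ne c 0 with rfl | hc
  · exact summable_zero.congr (by intro n; simp)
  · have hz : ‖z‖ < 1 := by
      by_contra hz
      push_neg at hz
      have h' : Tendsto (fun k : ℕ => (k : ℂ) * z ^ k) atTop (nhds 0) := by
        have h2 := h.div_const c
        rw [zero_div] at h2
        refine h2.congr fun k => ?_
        field_simp
      have hn := h'.norm
      simp only [norm_zero] at hn
      have h1 : ∀ᶠ k : ℕ in atTop, ‖(k : ℂ) * z ^ k‖ < 1 :=
        hn.eventually_lt_const one_pos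
      have h2 : ∀ᶠ k : ℕ in atTop, (1 : ℝ) ≤ ‖(k : ℂ) * z ^ k‖ := by
        filter_upwards [eventually_ge_atTop 1] with k hk
        have hk1 : (1 : ℝ) ≤ (k : ℝ) := by exact_mod_cast hk
        have hz1 : (1 : ℝ) ≤ ‖z‖ ^ k := one_le_pow₀ hz
        calc (1 : ℝ) = 1 * 1 := by ring
        _ ≤ (k : ℝ) * ‖z‖ ^ k := by
            exact mul_le_mul hk1 hz1 zero_le_one (by positivity)
        _ = ‖(k : ℂ) * z ^ k‖ := by
            rw [norm_mul, norm_pow, Complex.norm_natCast]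
      obtain ⟨k, hlt, hge⟩ := (h1.and h2).exists
      linarith
    have hs := (summable_pow_mul_geometric_of_norm_lt_one (R := ℂ) 1 hz).mul_left c
    exact hs.congr fun n => by ring

private lemma extract_wls (A B z₁ z₂ : ℂ) (hz : z₁ ≠ z₂)
    (h1 : Filter.Tendsto (fun k : ℕ => A * z₁ ^ k + B * z₂ ^ k) Filter.atTop (nhds 0))
    (h2 : Filter.Tendsto (fun k : ℕ => (k : ℂ) * (A * z₁ ^ k + B * z₂ ^ k))
      Filter.atTop (nhds 0)) :
    Filter.Tendsto (fun k : ℕ => (k : ℂ) * A * z₁ ^ k) Filter.atTop (nhds 0) := by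
  have h1' := h1.comp (tendsto_add_atTop_nat 1)
  have h2' := h2.comp (tendsto_add_atTop_nat 1)
  have key := (h2'.sub (h2.const_mul z₂)).sub h1'
  rw [show (0 - z₂ * 0 - 0 : ℂ) = 0 by ring] at key
  have key2 : Tendsto (fun k : ℕ => (k : ℂ) * A * z₁ ^ k * (z₁ - z₂)) atTop (nhds 0) := by
    refine key.congr fun k => ?_
    simp only [Function.comp_apply]
    push_cast
    ring
  have key3 := key2.div_const (z₁ - z₂)
  rw [zero_div] at key3
  refine key3.congr fun k => ?_
  rw [mul_div_cancel_right₀ _ (sub_ne_zero.mpr hz)]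

theorem weighted_linear_sum_infinite (G : ℕ → ℂ) (hG : ∀ i, G (i + 2) = G (i + 1) + G i)
    (w : ℂ) (hw0 : w ≠ 0) (hw : 1 - w - w ^ 2 ≠ 0)
    (hlim1 : Filter.Tendsto (fun k : ℕ => w ^ k * G k) Filter.atTop (nhds 0))
    (hlim2 : Filter.Tendsto (fun k : ℕ => (k : ℂ) * w ^ k * G k) Filter.atTop (nhds 0)) :
    HasSum (fun j : ℕ => w ^ j * (j : ℂ) * G j)
      (((2 - w) * w ^ 2 * G 0 + (w ^ 2 + 1) * w * G 1) / (w ^ 2 + w - 1) ^ 2) := by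
  -- golden-ratio roots
  obtain ⟨φ, ψ, hφ2, hψ2, hφψ⟩ : ∃ φ ψ : ℂ, φ ^ 2 = φ + 1 ∧ ψ ^ 2 = ψ + 1 ∧ φ ≠ ψ := by
    set s : ℂ := (Real.sqrt 5 : ℂ) with hs_def
    have hs_sq : s ^ 2 = 5 := by
      rw [hs_def, ← Complex.ofReal_pow, Real.sq_sqrt (by norm_num : (5:ℝ) ≥ 0)]
      norm_num
    have hs_ne : s ≠ 0 := by
      intro h; rw [h] at hs_sq; norm_num at hs_sq
    refine ⟨(1 + s) / 2, (1 - s) / 2, ?_, ?_, ?_⟩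
    · field_simp
      linear_combination hs_sq
    · field_simp
      linear_combination hs_sq
    · intro h
      apply hs_ne
      have : (1 + s) / 2 - (1 - s) / 2 = 0 := by rw [h]; ring
      have hs : s = 0 := by linear_combination this
      exact hs
  have hd : φ - ψ ≠ 0 := sub_ne_zero.mpr hφψ
  obtain ⟨A, B, hAB0, hAB1⟩ : ∃ A B : ℂ, A + B = G 0 ∧ A * φ + B * ψ = G 1 := by
    refine ⟨(G 1 - ψ * G 0) / (φ - ψ), (φ * G 0 - G 1) / (φ - ψ), ?_, ?_⟩
    · field_simp
      ring
    · field_simp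
      ring
  have closed : ∀ n, G n = A * φ ^ n + B * ψ ^ n := by
    have key : ∀ n, G n = A * φ ^ n + B * ψ ^ n ∧
        G (n + 1) = A * φ ^ (n + 1) + B * ψ ^ (n + 1) := by
      intro n
      induction n with
      | zero =>
        constructor
        · simpa using hAB0.symm
        · simpa using hAB1.symm
      | succ n ih =>
        refine ⟨ih.2, ?_⟩
        rw [show n + 1 + 1 = n + 2 from rfl, hG n, ih.1, ih.2]
        linear_combination -(A * φ ^ n * hφ2) - B * ψ ^ n * hψ2
    exact fun n => (key n).1
  -- summability
  have hww : w * φ ≠ w * ψ := fun h => hφψ (mul_left_cancel₀ hw0 h)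
  have hl1 : Tendsto (fun k : ℕ => A * (w * φ) ^ k + B * (w * ψ) ^ k) atTop (nhds 0) := by
    refine hlim1.congr fun k => ?_
    rw [closed k]; rw [mul_pow, mul_pow]; ring
  have hl2 : Tendsto (fun k : ℕ => (k : ℂ) * (A * (w * φ) ^ k + B * (w * ψ) ^ k))
      atTop (nhds 0) := by
    refine hlim2.congr fun k => ?_
    rw [closed k]; rw [mul_pow, mul_pow]; ring
  have hl1' : Tendsto (fun k : ℕ => B * (w * ψ) ^ k + A * (w * φ) ^ k) atTop (nhds 0) :=
    hl1.congr fun k => by ring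
  have hl2' : Tendsto (fun k : ℕ => (k : ℂ) * (B * (w * ψ) ^ k + A * (w * φ) ^ k))
      atTop (nhds 0) := hl2.congr fun k => by ring
  have eA := extract_wls A B (w * φ) (w * ψ) hww hl1 hl2
  have eB := extract_wls B A (w * ψ) (w * φ) (Ne.symm hww) hl1' hl2'
  have sA := summable_aux_wls A (w * φ) (eA.congr fun k => by ring)
  have sB := summable_aux_wls B (w * ψ) (eB.congr fun k => by ring)
  have hsum : Summable (fun j : ℕ => w ^ j * (j : ℂ) * G j) := by
    refine (sA.add sB).congr fun j => ?_
    rw [closed j, mul_pow, mul_pow]; ring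
  -- telescoping
  set D : ℂ := 1 - w - w ^ 2 with hD_def
  have hD : D ≠ 0 := hw
  set α : ℂ := (1 - w) / D with hα_def
  set γ : ℂ := w / D with hγ_def
  set δ : ℂ := w * (1 + w ^ 2) / D ^ 2 with hδ_def
  set β : ℂ := w ^ 2 * (2 - w) / D ^ 2 with hβ_def
  set H : ℕ → ℂ := fun n => w ^ n * ((α * n + β) * G n + (γ * n + δ) * G (n + 1)) with hH_def
  have tele : ∀ n : ℕ, H n - H (n + 1) = w ^ n * (n : ℂ) * G n := by
    intro n
    simp only [hH_def]
    rw [show n + 1 + 1 = n + 2 from rfl, hG n]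
    rw [hα_def, hβ_def, hγ_def, hδ_def]
    rw [pow_succ]
    push_cast
    field_simp
    ring
  have sums : ∀ n : ℕ, ∑ j ∈ Finset.range n, w ^ j * (j : ℂ) * G j = H 0 - H n := by
    intro n
    induction n with
    | zero => simp
    | succ n ih =>
      rw [Finset.sum_range_succ, ih, ← tele n]; ring
  have tG1 : Tendsto (fun n : ℕ => w ^ n * G (n + 1)) atTop (nhds 0) := by
    have h := (hlim1.comp (tendsto_add_atTop_nat 1)).const_mul w⁻¹
    rw [mul_zero] at h
    refine h.congr fun n => ?_
    simp only [Function.comp_apply]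
    rw [pow_succ]
    field_simp
  have tG2 : Tendsto (fun n : ℕ => (n : ℂ) * w ^ n * G (n + 1)) atTop (nhds 0) := by
    have h1 := (hlim2.comp (tendsto_add_atTop_nat 1)).const_mul w⁻¹
    have h2 := (hlim1.comp (tendsto_add_atTop_nat 1)).const_mul w⁻¹
    rw [mul_zero] at h1 h2
    have h := h1.sub h2
    rw [sub_zero] at h
    refine h.congr fun n => ?_
    simp only [Function.comp_apply]
    rw [pow_succ]
    push_cast
    field_simp
    ring
  have tH : Tendsto H atTop (nhds 0) := by
    have h := ((hlim2.const_mul α).add (hlim1.const_mul β)).add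
      ((tG2.const_mul γ).add (tG1.const_mul δ))
    simp only [mul_zero, add_zero] at h
    refine h.congr fun n => ?_
    simp only [hH_def]
    ring
  have tSum : Tendsto (fun n : ℕ => ∑ j ∈ Finset.range n, w ^ j * (j : ℂ) * G j)
      atTop (nhds (H 0)) := by
    have h : Tendsto (fun n : ℕ => H 0 - H n) atTop (nhds (H 0 - 0)) :=
      tendsto_const_nhds.sub tH
    rw [sub_zero] at h
    exact h.congr fun n => (sums n).symm
  have hH0 : H 0 = ((2 - w) * w ^ 2 * G 0 + (w ^ 2 + 1) * w * G 1) / (w ^ 2 + w - 1) ^ 2 := by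
    have hD' : w ^ 2 + w - 1 ≠ 0 := by
      intro h; apply hD; rw [hD_def]; linear_combination -h
    simp only [hH_def, hα_def, hβ_def, hγ_def, hδ_def, hD_def]
    push_cast
    field_simp
    ring
  rw [hsum.hasSum_iff_tendsto_nat, ← hH0]
  exact tSum
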